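/- Monotonicity in the matched weight when there is a single similar visual word pair (true instance of Theorem 1, first condition): let m, n satisfy 1 ≤ m, 1 ≤ n, take l = 1, let 0 < λ_0 ≤ 1, ξ_k > 0 for all k < m, η_k > 0 for all k < n, and let ξ' : Fin m → ℝ satisfy ξ'_k = ξ_k for all k ≠ 0 and ξ_0 ≤ ξ'_0. Then F(m, n, 1, λ, ξ, η) ≤ F(m, n, 1, λ, ξ', η): increasing the weight of the visual word belonging to the unique similar visual word pair does not decrease the similarity. -/

import Mathlib

open Finset

/-- Extend a weight vector on `Fin m` to `ℕ`, zero outside. -/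
noncomputable def extW {m : ℕ} (ξ : Fin m → ℝ) (k : ℕ) : ℝ :=
  if h : k < m then ξ ⟨k, h⟩ else 0

/-- The image similarity measurement of Zhang et al. (Eq. 2). -/
noncomputable def F (m n l : ℕ) (lam : Fin l → ℝ) (ξ : Fin m → ℝ) (η : Fin n → ℝ) : ℝ :=
  (∑ k : Fin l, lam k * extW ξ k * extW η k) /
    (Real.sqrt ((∑ k : Fin m, ξ k) * (∑ k : Fin n, η k)) *
      Real.sqrt ((∑ k : Fin l, (lam k) ^ 2 * extW ξ k * extW η k) +
        (∑ k ∈ Finset.Ico l m, extW ξ k) * (∑ k ∈ Finset.Ico l n, extW η k)))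

set_option maxHeartbeats 2000000 in
theorem F_mono_matched_weight_single_pair (m n : ℕ) (hm : 1 ≤ m) (hn : 1 ≤ n)
    (lam : Fin 1 → ℝ) (hlam0 : 0 < lam 0) (hlam1 : lam 0 ≤ 1)
    (ξ ξ' : Fin m → ℝ) (η : Fin n → ℝ)
    (hξ : ∀ k, 0 < ξ k) (hη : ∀ k, 0 < η k)
    (hsame : ∀ k, k ≠ (⟨0, hm⟩ : Fin m) → ξ' k = ξ k)
    (h0le : ξ ⟨0, hm⟩ ≤ ξ' ⟨0, hm⟩) :
    F m n 1 lam ξ η ≤ F m n 1 lam ξ' η := by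
  have ha : (0:ℝ) < ξ ⟨0, hm⟩ := hξ _
  have he : (0:ℝ) < η ⟨0, hn⟩ := hη _
  set L := lam 0 with hLdef
  set a := ξ ⟨0, hm⟩ with hadef
  set a' := ξ' ⟨0, hm⟩ with ha'def
  set e := η ⟨0, hn⟩ with hedef
  have ha' : 0 < a' := lt_of_lt_of_le ha h0le
  set S := ∑ k ∈ Finset.Ico 1 m, extW ξ k with hSdef
  set U := ∑ k ∈ Finset.Ico 1 n, extW η k with hUdef
  set T := ∑ k : Fin n, η k with hTdef
  have hT : 0 < T := Finset.sum_pos (fun k _ => hη k) ⟨⟨0, hn⟩, Finset.mem_univ _⟩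
  have hS : 0 ≤ S := Finset.sum_nonneg fun k _ => by
    unfold extW; split
    · exact (hξ _).le
    · rfl
  have hU : 0 ≤ U := Finset.sum_nonneg fun k _ => by
    unfold extW; split
    · exact (hη _).le
    · rfl
  have hSξ' : ∑ k ∈ Finset.Ico 1 m, extW ξ' k = S := by
    apply Finset.sum_congr rfl
    intro k hk
    simp only [Finset.mem_Ico] at hk
    unfold extW
    split
    · exact hsame _ (by simp only [ne_eq, Fin.mk.injEq]; omega)
    · rfl
  have hext : ∀ (f : Fin m → ℝ) (i : Fin m), extW f (i : ℕ) = f i := fun f i => by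
    unfold extW; rw [dif_pos i.isLt]
  have hsum : ∀ f : Fin m → ℝ, ∑ k : Fin m, f k = extW f 0 + ∑ k ∈ Finset.Ico 1 m, extW f k := by
    intro f
    rw [show (∑ k : Fin m, f k) = ∑ k ∈ Finset.range m, extW f k by
      rw [← Fin.sum_univ_eq_sum_range]; exact (Finset.sum_congr rfl fun i _ => (hext f i).symm)]
    rw [Finset.range_eq_Ico, Finset.sum_eq_sum_Ico_succ_bot hm]
  have h0ξ : extW ξ 0 = a := by unfold extW; exact dif_pos hm
  have h0ξ' : extW ξ' 0 = a' := by unfold extW; exact dif_pos hm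
  have h0η : extW η 0 = e := by unfold extW; exact dif_pos hn
  have hsumξ : ∑ k : Fin m, ξ k = a + S := by rw [hsum ξ, h0ξ]
  have hsumξ' : ∑ k : Fin m, ξ' k = a' + S := by rw [hsum ξ', h0ξ', hSξ']
  have hF : ∀ (b : ℝ) (f : Fin m → ℝ), (∑ k : Fin m, f k = b + S) →
      (∑ k ∈ Finset.Ico 1 m, extW f k = S) → extW f 0 = b →
      F m n 1 lam f η = (L * b * e) /
        (Real.sqrt ((b + S) * T) * Real.sqrt (L ^ 2 * b * e + S * U)) := by
    intro b f h1 h2 h3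
    unfold F
    rw [Fin.sum_univ_one, Fin.sum_univ_one, h1, h2]
    simp only [Fin.val_zero, h3, h0η]
    rfl
  rw [hF a ξ hsumξ hSdef.symm h0ξ, hF a' ξ' hsumξ' hSξ' h0ξ']
  have hQ : 0 < L ^ 2 * a * e + S * U := by positivity
  have hQ' : 0 < L ^ 2 * a' * e + S * U := by positivity
  have hP : 0 < (a + S) * T := by positivity
  have hP' : 0 < (a' + S) * T := by positivity
  rw [div_le_div_iff₀ (by positivity) (by positivity)]
  have e1 : L * a * e * (Real.sqrt ((a' + S) * T) * Real.sqrt (L ^ 2 * a' * e + S * U))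
      = Real.sqrt ((L * a * e) ^ 2 * (((a' + S) * T) * (L ^ 2 * a' * e + S * U))) := by
    rw [Real.sqrt_mul (by positivity : (0:ℝ) ≤ (L * a * e) ^ 2) (((a' + S) * T) * (L ^ 2 * a' * e + S * U)),
      Real.sqrt_mul hP'.le (L ^ 2 * a' * e + S * U), Real.sqrt_sq (by positivity)]
  have e2 : L * a' * e * (Real.sqrt ((a + S) * T) * Real.sqrt (L ^ 2 * a * e + S * U))
      = Real.sqrt ((L * a' * e) ^ 2 * (((a + S) * T) * (L ^ 2 * a * e + S * U))) := by
    rw [Real.sqrt_mul (by positivity : (0:ℝ) ≤ (L * a' * e) ^ 2) (((a + S) * T) * (L ^ 2 * a * e + S * U)),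
      Real.sqrt_mul hP.le (L ^ 2 * a * e + S * U), Real.sqrt_sq (by positivity)]
  rw [e1, e2]
  apply Real.sqrt_le_sqrt
  have key : a ^ 2 * ((a' + S) * (L ^ 2 * a' * e + S * U))
      ≤ a' ^ 2 * ((a + S) * (L ^ 2 * a * e + S * U)) := by
    nlinarith [mul_nonneg (mul_nonneg (mul_nonneg hS hU) (mul_pos ha ha').le) (sub_nonneg.2 h0le),
      mul_nonneg (mul_nonneg (mul_nonneg hS (by positivity : (0:ℝ) ≤ L ^ 2 * e)) (mul_pos ha ha').le) (sub_nonneg.2 h0le),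
      mul_nonneg (mul_nonneg (mul_nonneg (mul_nonneg hS hS) hU) (by linarith : (0:ℝ) ≤ a' + a)) (sub_nonneg.2 h0le)]
  nlinarith [mul_le_mul_of_nonneg_left key (by positivity : (0:ℝ) ≤ L ^ 2 * e ^ 2 * T)]
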